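/- Assume a relativistic fluid with u^αu_α = 1, θ > 0, r > 0, F > 0, ϑ ≤ 0, satisfying θ r u^α ∂_α s = ϑF(∇^μu^ν∇_μu_ν + ∇^μu^ν∇_νu_μ - u^μ∇_μu^α u^ν∇_νu_α). Then, using Σ^{αβ}Σ_{αβ} = 2F²(∇^μu^ν∇_μu_ν + ∇^μu^ν∇_νu_μ - u^μ∇_μu^α u^ν∇_νu_α) and Σ^{αβ}Σ_{αβ} ≤ 0 (which holds since Σ is a symmetric tensor orthogonal to u in a metric of signature (+,-,-,-)), the entropy production along the flow is nonnegative: u^α∂_α s = (ϑ/(2θrF)) Σ^{αβ}Σ_{αβ} ≥ 0. -/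

import Mathlib

/-- nonnegativity of entropy production along the flow. Here
`uds` denotes u^α∂_αs, `E` denotes ∇^μu^ν∇_μu_ν + ∇^μu^ν∇_νu_μ
- u^μ∇_μu^α u^ν∇_νu_α, and `SS` denotes Σ^{αβ}Σ_{αβ}. -/
theorem entropy_production_nonnegative
    (θ r F ϑ uds E SS : ℝ)
    (hθ : 0 < θ) (hr : 0 < r) (hF : 0 < F) (hϑ : ϑ ≤ 0)
    (heq : θ * r * uds = ϑ * F * E)
    (hSS : SS = 2 * F^2 * E)
    (hSSneg : SS ≤ 0) :
    uds = ϑ / (2 * θ * r * F) * SS ∧ 0 ≤ uds := by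
  have hθr : (θ * r) ≠ 0 := by positivity
  have huds : uds = ϑ * F * E / (θ * r) := by
    field_simp
    linarith [heq]
  constructor
  · rw [huds, hSS]
    field_simp
  · rw [huds]
    have hE : E ≤ 0 := by nlinarith [pow_pos hF 2]
    have : 0 ≤ ϑ * F * E := by nlinarith
    positivity
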